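/- Let w ≥ 1, n ≥ 1 and set Q(u₁,u₂) = Σ_{0≤i≤w-1, 0≤j≤n-1} u₁^{i+j}u₂^{i-j+n-1} − Σ_{1≤i≤w-1, 0≤j≤n-2} u₁^{i+j}u₂^{i-j+n-2}. For each fixed integer a, consider the sequence of coefficients of u₁^a u₂^b in Q as b ranges over ℤ. Then the nonzero coefficients in this sequence alternate in sign. -/

import Mathlib

open Finset

noncomputable section

/-- Laurent polynomials in two variables `u₁, u₂` over `ℤ`. -/
abbrev L2 := AddMonoidAlgebra ℤ (ℤ × ℤ)

/-- The monomial `u₁^r * u₂^s`. -/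
def mono (r s : ℤ) : L2 := AddMonoidAlgebra.single (r, s) 1

/-- The `i`-th diagonal part `P^[i]`: the sum of all monomials `a·u₁^r·u₂^s` of `P`
with `r - s = i`. -/
def diag (P : L2) (i : ℤ) : L2 :=
  AddMonoidAlgebra.ofCoeff (Finsupp.filter (fun p => p.1 - p.2 = i) P.coeff)

open scoped Classical

/-- Summing an indicator of `f x = t` over a set on which `f` is injective. -/
lemma sum_ind {ι : Type*} (s : Finset ι) (f : ι → ℤ × ℤ) (t : ℤ × ℤ)
    (hf : ∀ x ∈ s, ∀ y ∈ s, f x = f y → x = y) :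
    (∑ x ∈ s, if f x = t then (1:ℤ) else 0) = if ∃ x ∈ s, f x = t then 1 else 0 := by
  by_cases h : ∃ x ∈ s, f x = t
  · obtain ⟨x0, hx0, hfx0⟩ := h
    rw [if_pos ⟨x0, hx0, hfx0⟩, Finset.sum_eq_single x0]
    · rw [if_pos hfx0]
    · intro y hy hne
      rw [if_neg fun hfy => hne (hf y hy x0 hx0 (hfy.trans hfx0.symm))]
    · intro hx; exact absurd hx0 hx
  · rw [if_neg h, Finset.sum_eq_zero]
    intro x hx
    exact if_neg fun hfx => h ⟨x, hx, hfx⟩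

/-- `(a,b)` is hit by the positive part of `Q`. -/
def PosC (w n : ℕ) (a b : ℤ) : Prop :=
  ∃ i j : ℕ, i < w ∧ j < n ∧ (i:ℤ)+j = a ∧ (i:ℤ)-j+(n:ℤ)-1 = b

/-- `(a,b)` is hit by the negative part of `Q`. -/
def NegC (w n : ℕ) (a b : ℤ) : Prop :=
  ∃ i j : ℕ, 1 ≤ i ∧ i ≤ w-1 ∧ j < n-1 ∧ (i:ℤ)+j = a ∧ (i:ℤ)-j+(n:ℤ)-2 = b

/-- The two parts live on opposite parities of `a+b`, hence never overlap. -/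
lemma disj (w n : ℕ) (a b : ℤ) : PosC w n a b → NegC w n a b → False := by
  rintro ⟨i, j, _, _, h3, h4⟩ ⟨i', j', _, _, _, h8, h9⟩
  omega

/-- The coefficient of `u₁^a u₂^b` in `Q`. -/
lemma coeff_eq (w n : ℕ) (a b : ℤ) :
    ((∑ i ∈ range w, ∑ j ∈ range n, mono ((i : ℤ) + j) ((i : ℤ) - j + n - 1))
        - ∑ i ∈ Icc 1 (w - 1), ∑ j ∈ range (n - 1),
            mono ((i : ℤ) + j) ((i : ℤ) - j + n - 2)).coeff (a, b)
    = (if PosC w n a b then (1:ℤ) else 0) - (if NegC w n a b then (1:ℤ) else 0) := by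
  rw [AddMonoidAlgebra.coeff_sub, Finsupp.sub_apply]
  have h1 : ((∑ i ∈ range w, ∑ j ∈ range n,
      mono ((i : ℤ) + j) ((i : ℤ) - j + n - 1)) : L2).coeff (a, b)
      = ∑ p ∈ range w ×ˢ range n,
          (if (((p.1 : ℤ) + p.2, (p.1 : ℤ) - p.2 + n - 1) : ℤ × ℤ) = (a, b) then (1:ℤ) else 0) := by
    rw [← Finset.sum_product']
    rw [AddMonoidAlgebra.coeff_sum, Finset.sum_apply']
    refine Finset.sum_congr rfl fun p _ => ?_
    simp [mono, Finsupp.single_apply]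
  have h2 : ((∑ i ∈ Icc 1 (w-1), ∑ j ∈ range (n-1),
      mono ((i : ℤ) + j) ((i : ℤ) - j + n - 2)) : L2).coeff (a, b)
      = ∑ p ∈ Icc 1 (w-1) ×ˢ range (n-1),
          (if (((p.1 : ℤ) + p.2, (p.1 : ℤ) - p.2 + n - 2) : ℤ × ℤ) = (a, b) then (1:ℤ) else 0) := by
    rw [← Finset.sum_product']
    rw [AddMonoidAlgebra.coeff_sum, Finset.sum_apply']
    refine Finset.sum_congr rfl fun p _ => ?_
    simp [mono, Finsupp.single_apply]
  rw [h1, h2, sum_ind, sum_ind]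
  · congr 1
    · apply if_congr _ rfl rfl
      constructor
      · rintro ⟨⟨i, j⟩, hmem, heq⟩
        simp only [Finset.mem_product, Finset.mem_range] at hmem
        rw [Prod.ext_iff] at heq
        exact ⟨i, j, hmem.1, hmem.2, heq.1, heq.2⟩
      · rintro ⟨i, j, h1, h2, h3, h4⟩
        exact ⟨(i, j), by simp [Finset.mem_product, h1, h2], by simp [Prod.ext_iff, h3, h4]⟩
    · apply if_congr _ rfl rfl
      constructor
      · rintro ⟨⟨i, j⟩, hmem, heq⟩
        simp only [Finset.mem_product, Finset.mem_range, Finset.mem_Icc] at hmem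
        rw [Prod.ext_iff] at heq
        exact ⟨i, j, hmem.1.1, hmem.1.2, hmem.2, heq.1, heq.2⟩
      · rintro ⟨i, j, h1, h2, h3, h4, h5⟩
        exact ⟨(i, j), by simp [Finset.mem_product, Finset.mem_Icc, h1, h2, h3],
          by simp [Prod.ext_iff, h4, h5]⟩
  · rintro ⟨x1, x2⟩ _ ⟨y1, y2⟩ _ h
    rw [Prod.ext_iff] at h
    simp only [Prod.mk.injEq] at h ⊢
    omega
  · rintro ⟨x1, x2⟩ _ ⟨y1, y2⟩ _ h
    rw [Prod.ext_iff] at h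
    simp only [Prod.mk.injEq] at h ⊢
    omega

/-- For `Q = Σ_{0≤i≤w-1, 0≤j≤n-1} u₁^{i+j}u₂^{i-j+n-1} − Σ_{1≤i≤w-1, 0≤j≤n-2} u₁^{i+j}u₂^{i-j+n-2}`,
in each column (fixed `u₁`-exponent `a`) the nonzero coefficients alternate in sign:
consecutive nonzero coefficients (with only zero coefficients in between) have
opposite signs. -/
theorem alternating_columns (w n : ℕ) (hw : 1 ≤ w) (hn : 1 ≤ n)
    (Q : L2)
    (hQ : Q = (∑ i ∈ range w, ∑ j ∈ range n, mono ((i : ℤ) + j) ((i : ℤ) - j + n - 1))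
        - ∑ i ∈ Icc 1 (w - 1), ∑ j ∈ range (n - 1),
            mono ((i : ℤ) + j) ((i : ℤ) - j + n - 2)) :
    ∀ a b₁ b₂ : ℤ, b₁ < b₂ → Q.coeff (a, b₁) ≠ 0 → Q.coeff (a, b₂) ≠ 0 →
      (∀ b : ℤ, b₁ < b → b < b₂ → Q.coeff (a, b) = 0) →
      Q.coeff (a, b₁) * Q.coeff (a, b₂) < 0 := by
  have hcoeff : ∀ a b : ℤ, Q.coeff (a, b) =
      (if PosC w n a b then (1:ℤ) else 0) - (if NegC w n a b then (1:ℤ) else 0) := by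
    intro a b; rw [hQ]; exact coeff_eq w n a b
  intro a b₁ b₂ hlt h1 h2 hbet
  have val : ∀ b : ℤ, (PosC w n a b ∧ Q.coeff (a, b) = 1) ∨ (NegC w n a b ∧ Q.coeff (a, b) = -1)
      ∨ Q.coeff (a, b) = 0 := by
    intro b
    rcases Classical.em (PosC w n a b) with hp | hp
    · left; exact ⟨hp, by rw [hcoeff, if_pos hp, if_neg (fun hng => disj w n a b hp hng)]; ring⟩
    rcases Classical.em (NegC w n a b) with hng | hng
    · right; left; exact ⟨hng, by rw [hcoeff, if_neg hp, if_pos hng]; ring⟩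
    · right; right; rw [hcoeff, if_neg hp, if_neg hng]; ring
  rcases val b₁ with ⟨hp1, hv1⟩ | ⟨hn1, hv1⟩ | hv1
  · rcases val b₂ with ⟨hp2, hv2⟩ | ⟨_, hv2⟩ | hv2
    · -- both positive: exhibit a negative between
      exfalso
      obtain ⟨i₁, j₁, hi₁, hj₁, e₁, e₁'⟩ := hp1
      obtain ⟨i₂, j₂, hi₂, hj₂, e₂, e₂'⟩ := hp2
      have hneg : NegC w n a (b₁ + 1) :=
        ⟨i₁ + 1, j₁ - 1, by omega, by omega, by omega, by omega, by omega⟩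
      have hz := hbet (b₁ + 1) (by omega) (by omega)
      rw [hcoeff, if_neg (fun hp => disj w n a (b₁+1) hp hneg), if_pos hneg] at hz
      omega
    · rw [hv1, hv2]; norm_num
    · exact absurd hv2 h2
  · rcases val b₂ with ⟨_, hv2⟩ | ⟨hn2, hv2⟩ | hv2
    · rw [hv1, hv2]; norm_num
    · -- both negative: exhibit a positive between
      exfalso
      obtain ⟨i₁, j₁, hi₁, hi₁', hj₁, e₁, e₁'⟩ := hn1
      obtain ⟨i₂, j₂, hi₂, hi₂', hj₂, e₂, e₂'⟩ := hn2
      have hpos : PosC w n a (b₁ + 1) := ⟨i₁, j₁, by omega, by omega, by omega, by omega⟩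
      have hz := hbet (b₁ + 1) (by omega) (by omega)
      rw [hcoeff, if_pos hpos, if_neg (fun hng => disj w n a (b₁+1) hpos hng)] at hz
      omega
    · exact absurd hv2 h2
  · exact absurd hv1 h1
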